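/- The series \sum_{k=1}^{\infty} 1/(k \binom{2k}{k}) converges to \pi/(3\sqrt{3}). -/

import Mathlib

open Real
open MeasureTheory intervalIntegral Set

lemma fac_prod (m n : ℕ) :
    (m.factorial : ℂ) * ∏ j ∈ Finset.range (n + 1), ((m : ℂ) + 1 + j)
      = ((m + n + 1).factorial : ℂ) := by
  induction n with
  | zero => simp [Nat.factorial_succ]; push_cast; ring
  | succ n ih =>
      rw [Finset.prod_range_succ, ← mul_assoc, ih]
      have : (m + (n+1) + 1).factorial = (m + n + 1 + 1) * (m + n + 1).factorial := by
        rw [show m + (n+1) + 1 = (m + n + 1) + 1 by ring, Nat.factorial_succ]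
      rw [this]
      push_cast
      ring

lemma beta_nat (m n : ℕ) :
    ∫ x in (0:ℝ)..1, x ^ m * (1 - x) ^ n
      = (m.factorial * n.factorial : ℝ) / (m + n + 1).factorial := by
  have hu : 0 < Complex.re ((m : ℂ) + 1) := by simp; positivity
  have h := Complex.betaIntegral_eval_nat_add_one_right hu n
  have hprod : ∏ j ∈ Finset.range (n + 1), ((m : ℂ) + 1 + j)
      = ((m + n + 1).factorial : ℂ) / (m.factorial : ℂ) := by
    rw [eq_div_iff (by exact_mod_cast (Nat.factorial_ne_zero m)), mul_comm]
    exact fac_prod m n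
  rw [hprod] at h
  have hL : Complex.betaIntegral ((m : ℂ) + 1) ((n : ℂ) + 1)
      = ((∫ x in (0:ℝ)..1, x ^ m * (1 - x) ^ n : ℝ) : ℂ) := by
    rw [Complex.betaIntegral, ← intervalIntegral.integral_ofReal]
    apply intervalIntegral.integral_congr
    intro x _
    simp only [add_sub_cancel_right, Complex.cpow_natCast]
    push_cast
    ring
  rw [hL] at h
  have hfac : ((m.factorial : ℂ)) ≠ 0 := by exact_mod_cast Nat.factorial_ne_zero m
  have : ((∫ x in (0:ℝ)..1, x ^ m * (1 - x) ^ n : ℝ) : ℂ)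
      = ((m.factorial * n.factorial : ℝ) / (m + n + 1).factorial : ℝ) := by
    rw [h]
    push_cast
    rw [div_div_eq_mul_div]
    ring
  exact_mod_cast this


noncomputable def Fant (x : ℝ) : ℝ :=
  (1 / Real.sqrt 3) * Real.arctan ((2 * x - 1) / Real.sqrt 3)
    - (1 / 2) * Real.log (x ^ 2 - x + 1)

lemma s3 : Real.sqrt 3 > 0 := Real.sqrt_pos.2 (by norm_num)
lemma s3sq : Real.sqrt 3 * Real.sqrt 3 = 3 := Real.mul_self_sqrt (by norm_num)

lemma denom_pos (x : ℝ) : 0 < x ^ 2 - x + 1 := by nlinarith [sq_nonneg (x - 1/2), sq_nonneg x]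

lemma Fant_deriv (x : ℝ) : HasDerivAt Fant ((1 - x) / (x ^ 2 - x + 1)) x := by
  have h1 : HasDerivAt (fun x : ℝ => (2 * x - 1) / Real.sqrt 3) (2 / Real.sqrt 3) x := by
    have := ((hasDerivAt_id x).const_mul 2).sub_const 1
    simpa using this.div_const (Real.sqrt 3)
  have h2 : HasDerivAt (fun x : ℝ => Real.arctan ((2 * x - 1) / Real.sqrt 3))
      ((1 / (1 + ((2 * x - 1) / Real.sqrt 3) ^ 2)) * (2 / Real.sqrt 3)) x :=
    (Real.hasDerivAt_arctan _).comp x h1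
  have h3 : HasDerivAt (fun x : ℝ => x ^ 2 - x + 1) (2 * x - 1) x := by
    have := ((hasDerivAt_pow 2 x).sub (hasDerivAt_id x)).add_const 1
    simpa using this
  have h4 : HasDerivAt (fun x : ℝ => Real.log (x ^ 2 - x + 1))
      ((2 * x - 1) / (x ^ 2 - x + 1)) x := by
    simpa [div_eq_mul_inv] using h3.log (ne_of_gt (denom_pos x))
  have h := (h2.const_mul (1 / Real.sqrt 3)).sub (h4.const_mul (1 / 2))
  refine HasDerivAt.congr_deriv (f := Fant) h ?_
  symm
  have hd := denom_pos x
  have hpos : 0 < 1 + ((2 * x - 1) / Real.sqrt 3) ^ 2 := by positivity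
  field_simp
  have e : Real.sqrt 3 * ((3 + (2 * x - 1) ^ 2) * Real.sqrt 3)
      = (3 + (2 * x - 1) ^ 2) * 3 := by
    rw [mul_comm, mul_assoc, s3sq]
  rw [Real.sq_sqrt (by norm_num : (0:ℝ) ≤ 3)]
  have hd' : x * (x - 1) + 1 ≠ 0 := by nlinarith
  field_simp
  ring

lemma integral_closed :
    ∫ x in (0:ℝ)..1, (1 - x) / (x ^ 2 - x + 1) = π / (3 * Real.sqrt 3) := by
  have hcont : Continuous fun x : ℝ => (1 - x) / (x ^ 2 - x + 1) := by
    apply Continuous.div (by continuity) (by continuity)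
    intro x; exact ne_of_gt (denom_pos x)
  rw [intervalIntegral.integral_eq_sub_of_hasDerivAt
    (fun x _ => Fant_deriv x) (hcont.intervalIntegrable 0 1)]
  have harctan : Real.arctan (1 / Real.sqrt 3) = π / 6 := by
    have : Real.tan (π / 6) = 1 / Real.sqrt 3 := by
      rw [Real.tan_eq_sin_div_cos, Real.sin_pi_div_six, Real.cos_pi_div_six]
      rw [eq_div_iff (ne_of_gt s3)]
      field_simp
    rw [← this, Real.arctan_tan (by linarith [Real.pi_pos]) (by linarith [Real.pi_pos])]
  simp only [Fant]
  norm_num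
  simp only [← one_div, neg_div, Real.arctan_neg, harctan]
  rw [eq_div_iff (by positivity)]
  field_simp
  ring


lemma denom_pos' (x : ℝ) : 0 < x ^ 2 - x + 1 := by nlinarith [sq_nonneg (x - 1/2)]

lemma term_eq (k : ℕ) :
    ∫ x in (0:ℝ)..1, x ^ k * (1 - x) ^ (k + 1)
      = 1 / (((k + 1 : ℕ) : ℝ) * (Nat.choose (2 * (k + 1)) (k + 1) : ℝ)) := by
  rw [beta_nat]
  have hc := Nat.choose_mul_factorial_mul_factorial
    (show k + 1 ≤ 2 * (k + 1) by omega)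
  have h2 : 2 * (k + 1) - (k + 1) = k + 1 := by omega
  rw [h2] at hc
  have hk : k + (k + 1) + 1 = 2 * (k + 1) := by omega
  rw [hk]
  have hcR : ((2 * (k + 1)).factorial : ℝ)
      = (Nat.choose (2 * (k + 1)) (k + 1) : ℝ) * (k+1).factorial * (k+1).factorial := by
    exact_mod_cast hc.symm
  rw [hcR, Nat.factorial_succ (k)]
  have h1 : (0:ℝ) < (k+1).factorial := by exact_mod_cast (k+1).factorial_pos
  have h3 : (0:ℝ) < Nat.choose (2 * (k + 1)) (k + 1) := by
    exact_mod_cast Nat.choose_pos (show k + 1 ≤ 2 * (k + 1) by omega)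
  have h4 : (0:ℝ) < k.factorial := by exact_mod_cast k.factorial_pos
  push_cast
  field_simp

theorem stmt_3 :
    HasSum (fun k : ℕ =>
      1 / (((k + 1 : ℕ) : ℝ) * (Nat.choose (2 * (k + 1)) (k + 1) : ℝ)))
      (π / (3 * Real.sqrt 3)) := by
  set μ : Measure ℝ := volume.restrict (Set.Ioc (0:ℝ) 1) with hμ
  have hint : ∀ k : ℕ, ∫ a, (fun x => x ^ k * (1 - x) ^ (k + 1)) a ∂μ
      = ∫ x in (0:ℝ)..1, x ^ k * (1 - x) ^ (k + 1) := fun k =>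
    (intervalIntegral.integral_of_le zero_le_one).symm
  have hcont : ∀ k : ℕ, Continuous (fun x : ℝ => x ^ k * (1 - x) ^ (k + 1)) := by
    intro k; continuity
  have hF_int : ∀ k : ℕ, Integrable (fun x : ℝ => x ^ k * (1 - x) ^ (k + 1)) μ := by
    intro k
    exact ((hcont k).integrableOn_Ioc).integrable
  -- norm bound on Ioc 0 1
  have hbound : ∀ k : ℕ, ∀ x ∈ Set.Ioc (0:ℝ) 1,
      ‖x ^ k * (1 - x) ^ (k + 1)‖ ≤ (1/4 : ℝ) ^ k := by
    intro k x hx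
    obtain ⟨hx0, hx1⟩ := hx
    have h0 : (0:ℝ) ≤ x := le_of_lt hx0
    have h1 : (0:ℝ) ≤ 1 - x := by linarith
    rw [Real.norm_of_nonneg (by positivity)]
    have hxx : x * (1 - x) ≤ 1/4 := by nlinarith [sq_nonneg (2*x - 1)]
    calc x ^ k * (1 - x) ^ (k + 1)
        = (x * (1 - x)) ^ k * (1 - x) := by rw [mul_pow]; ring
      _ ≤ (1/4 : ℝ) ^ k * 1 := by
          apply mul_le_mul (pow_le_pow_left₀ (by positivity) hxx k) (by linarith)
            h1 (by positivity)
      _ = (1/4 : ℝ) ^ k := by ring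
  have hF_sum : Summable fun k : ℕ =>
      ∫ a, ‖a ^ k * (1 - a) ^ (k + 1)‖ ∂μ := by
    apply Summable.of_nonneg_of_le
      (fun k => integral_nonneg (fun a => norm_nonneg _))
      (fun k => ?_) (summable_geometric_of_lt_one (by norm_num) (by norm_num)
        (r := (1/4:ℝ)))
    calc ∫ a, ‖a ^ k * (1 - a) ^ (k + 1)‖ ∂μ
        ≤ ∫ _, (1/4:ℝ) ^ k ∂μ := by
          apply integral_mono_of_nonneg (Filter.Eventually.of_forall fun a => norm_nonneg _)
            (integrable_const _)
          exact (MeasureTheory.ae_restrict_iff' measurableSet_Ioc).2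
            (Filter.Eventually.of_forall (fun x hx => hbound k x hx))
      _ ≤ (1/4:ℝ) ^ k := by
          rw [hμ, MeasureTheory.integral_const]
          simp [Measure.restrict_apply_univ, Real.volume_Ioc]
  have key := MeasureTheory.hasSum_integral_of_summable_integral_norm
    (F := fun (k : ℕ) (x : ℝ) => x ^ k * (1 - x) ^ (k + 1)) (μ := μ) hF_int hF_sum
  -- identify the sum function a.e. and the integral value
  have htsum : ∀ x ∈ Set.Ioc (0:ℝ) 1,
      ∑' k : ℕ, x ^ k * (1 - x) ^ (k + 1) = (1 - x) / (x ^ 2 - x + 1) := by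
    intro x hx
    obtain ⟨hx0, hx1⟩ := hx
    have h0 : (0:ℝ) ≤ x * (1 - x) := by nlinarith
    have h1 : x * (1 - x) < 1 := by nlinarith
    have : ∀ k : ℕ, x ^ k * (1 - x) ^ (k + 1) = (1 - x) * (x * (1 - x)) ^ k := by
      intro k; rw [pow_succ, mul_pow]; ring
    rw [tsum_congr this, tsum_mul_left, tsum_geometric_of_lt_one h0 h1]
    rw [div_eq_mul_inv]
    congr 2
    ring
  have hval : (∫ x, (∑' k : ℕ, x ^ k * (1 - x) ^ (k + 1)) ∂μ) = π / (3 * Real.sqrt 3) := by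
    rw [hμ]
    rw [MeasureTheory.setIntegral_congr_fun measurableSet_Ioc htsum]
    rw [← intervalIntegral.integral_of_le zero_le_one]
    exact integral_closed
  rw [hval] at key
  have : (fun k : ℕ => ∫ a, a ^ k * (1 - a) ^ (k + 1) ∂μ)
      = fun k : ℕ => 1 / (((k + 1 : ℕ) : ℝ) * (Nat.choose (2 * (k + 1)) (k + 1) : ℝ)) := by
    funext k
    rw [hint k, term_eq k]
  rwa [this] at key
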